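/- Assume that for every (t,ω) ∈ [0,T] × Ω there exists ω̂ ∈ 𝒜(t,ω) such that X_u(ω̂) < X_t(ω) for all u ∈ (t,T]. Then for every (t,ω) with σ*(ω) ≥ t, the stopping time σ* is optimal with respect to 𝒜(t,ω): ℛ(t,ω;σ*) ≤ ℛ(t,ω;τ) for every stopping time τ with τ(ω'') ≥ t for all ω'' ∈ 𝒜(t,ω). -/

import Mathlib

open Set

noncomputable section

namespace SellingRegret

/-- Running maximum `X*_t(ω) = sup_{s ∈ [0,t]} X_s(ω)`, where `X_s(ω) = ω s`. -/
def Mstar (ω : ℝ → ℝ) (t : ℝ) : ℝ :=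
  sSup (ω '' Set.Icc 0 t)

/-- `𝒜(t,ω)`: the trajectories in `Ω` agreeing with `ω` on `[0,t]`. -/
def Hist (Ω : Set (ℝ → ℝ)) (t : ℝ) (ω : ℝ → ℝ) : Set (ℝ → ℝ) :=
  {ω' ∈ Ω | ∀ s ∈ Set.Icc 0 t, ω' s = ω s}

/-- A stopping time: a map `τ : Ω → [0,T]` such that whenever `τ(ω) ≤ t` and
`ω'` agrees with `ω` on `[0,t]`, one has `τ(ω') = τ(ω)`. -/
def IsStoppingTime (T : ℝ) (Ω : Set (ℝ → ℝ)) (τ : (ℝ → ℝ) → ℝ) : Prop :=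
  (∀ ω ∈ Ω, τ ω ∈ Set.Icc 0 T) ∧
  ∀ ω ∈ Ω, ∀ t ∈ Set.Icc 0 T, τ ω ≤ t →
    ∀ ω' ∈ Ω, (∀ s ∈ Set.Icc 0 t, ω' s = ω s) → τ ω' = τ ω

/-- Estimated regret `R(t,ω;τ,ω') = max{X*_{τ(ω')}(ω') − X_{τ(ω')}(ω'), ψ(τ(ω'),ω')}`
(it depends only on `τ` and `ω'`). -/
def regret (ψ : ℝ → (ℝ → ℝ) → ℝ) (τ : (ℝ → ℝ) → ℝ) (ω' : ℝ → ℝ) : ℝ :=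
  max (Mstar ω' (τ ω') - ω' (τ ω')) (ψ (τ ω') ω')

/-- Worst-case estimated regret `ℛ(t,ω;τ) = sup_{ω' ∈ 𝒜(t,ω)} R(t,ω;τ,ω')`,
valued in `[0,∞]`. -/
def worstRegret (Ω : Set (ℝ → ℝ)) (ψ : ℝ → (ℝ → ℝ) → ℝ)
    (t : ℝ) (ω : ℝ → ℝ) (τ : (ℝ → ℝ) → ℝ) : ENNReal :=
  ⨆ ω' ∈ Hist Ω t ω, ENNReal.ofReal (regret ψ τ ω')

/-- `σ*(ω) = inf {s ∈ [0,T] : X*_s(ω) − X_s(ω) ≥ ψ(s,ω)}`. -/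
def sigmaStar (T : ℝ) (ψ : ℝ → (ℝ → ℝ) → ℝ) (ω : ℝ → ℝ) : ℝ :=
  sInf {s ∈ Set.Icc 0 T | ψ s ω ≤ Mstar ω s - ω s}

/-- `τ ∈ 𝒯_t(ω)`: `τ(ω') ≥ t` for all `ω' ∈ 𝒜(t,ω)`. -/
def Admissible (Ω : Set (ℝ → ℝ)) (t : ℝ) (ω : ℝ → ℝ) (τ : (ℝ → ℝ) → ℝ) : Prop :=
  ∀ ω' ∈ Hist Ω t ω, t ≤ τ ω'

/-- `σ` is optimal with respect to `𝒜(t,ω)`. -/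
def OptimalAt (T : ℝ) (Ω : Set (ℝ → ℝ)) (ψ : ℝ → (ℝ → ℝ) → ℝ)
    (t : ℝ) (ω : ℝ → ℝ) (σ : (ℝ → ℝ) → ℝ) : Prop :=
  IsStoppingTime T Ω σ ∧ Admissible Ω t ω σ ∧
  ∀ τ, IsStoppingTime T Ω τ → Admissible Ω t ω τ →
    worstRegret Ω ψ t ω σ ≤ worstRegret Ω ψ t ω τ

/-- `σ` is Pareto optimal with respect to `𝒜(t,ω)`. -/
def ParetoOptimalAt (T : ℝ) (Ω : Set (ℝ → ℝ)) (ψ : ℝ → (ℝ → ℝ) → ℝ)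
    (t : ℝ) (ω : ℝ → ℝ) (σ : (ℝ → ℝ) → ℝ) : Prop :=
  IsStoppingTime T Ω σ ∧ Admissible Ω t ω σ ∧
  ¬ ∃ τ, IsStoppingTime T Ω τ ∧ Admissible Ω t ω τ ∧
      (∀ ω' ∈ Hist Ω t ω, regret ψ τ ω' ≤ regret ψ σ ω') ∧
      ∃ ω'' ∈ Hist Ω t ω, regret ψ τ ω'' < regret ψ σ ω''

/-- `σ` is perfect: optimal and Pareto optimal with respect to `𝒜(t,ω)`
whenever it is admissible for `𝒜(t,ω)`. -/
def Perfect (T : ℝ) (Ω : Set (ℝ → ℝ)) (ψ : ℝ → (ℝ → ℝ) → ℝ)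
    (σ : (ℝ → ℝ) → ℝ) : Prop :=
  IsStoppingTime T Ω σ ∧
  ∀ t ∈ Set.Icc 0 T, ∀ ω ∈ Ω, Admissible Ω t ω σ →
    OptimalAt T Ω ψ t ω σ ∧ ParetoOptimalAt T Ω ψ t ω σ

/-- Conditions (A) and (B) of Theorem 2 for a stopping time `σ`. -/
def CondAB (T : ℝ) (Ω : Set (ℝ → ℝ)) (ψ : ℝ → (ℝ → ℝ) → ℝ)
    (σ : (ℝ → ℝ) → ℝ) : Prop :=
  ∀ τ, IsStoppingTime T Ω τ → ∀ ω ∈ Ω,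
    (σ ω < τ ω → ∃ ω' ∈ Hist Ω (σ ω) ω, regret ψ σ ω' < regret ψ τ ω') ∧
    (τ ω < σ ω → ∀ ω' ∈ Hist Ω (τ ω) ω, regret ψ σ ω' < regret ψ τ ω')

/-- `Ω = C([0,T],ℝ)`: all trajectories continuous on `[0,T]`. -/
def OmegaC (T : ℝ) : Set (ℝ → ℝ) :=
  {ω | ContinuousOn ω (Set.Icc 0 T)}

/-- The two-sided Lipschitz corridor of Example 2:
`−L₁(t−s) ≤ ω(t) − ω(s) ≤ L₂(t−s)` for `0 ≤ s ≤ t ≤ T`. -/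
def OmegaL (T L₁ L₂ : ℝ) : Set (ℝ → ℝ) :=
  {ω | ∀ s t : ℝ, 0 ≤ s → s ≤ t → t ≤ T →
    -L₁ * (t - s) ≤ ω t - ω s ∧ ω t - ω s ≤ L₂ * (t - s)}

lemma bdd_img {T : ℝ} {ω : ℝ → ℝ} (hω : ContinuousOn ω (Icc 0 T))
    {s : ℝ} (hsT : s ≤ T) : BddAbove (ω '' Icc 0 s) :=
  ((isCompact_Icc).image_of_continuousOn (hω.mono (Icc_subset_Icc le_rfl hsT))).bddAbove

lemma le_Mstar {T : ℝ} {ω : ℝ → ℝ} (hω : ContinuousOn ω (Icc 0 T))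
    {s : ℝ} (hsT : s ≤ T) {u : ℝ} (hu : u ∈ Icc 0 s) : ω u ≤ Mstar ω s :=
  le_csSup (bdd_img hω hsT) ⟨u, hu, rfl⟩

lemma Mstar_mono {T : ℝ} {ω : ℝ → ℝ} (hω : ContinuousOn ω (Icc 0 T))
    {s₁ s₂ : ℝ} (h0 : 0 ≤ s₁) (h12 : s₁ ≤ s₂) (h2T : s₂ ≤ T) :
    Mstar ω s₁ ≤ Mstar ω s₂ :=
  csSup_le_csSup (bdd_img hω h2T) ⟨ω 0, 0, ⟨le_rfl, h0⟩, rfl⟩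
    (image_mono (Icc_subset_Icc le_rfl h12))

lemma Mstar_congr {ω ω' : ℝ → ℝ} {s : ℝ} (h : ∀ u ∈ Icc 0 s, ω' u = ω u) :
    Mstar ω' s = Mstar ω s := by
  unfold Mstar; rw [image_congr h]

lemma Mstar_zero {ω : ℝ → ℝ} : Mstar ω 0 = ω 0 := by
  unfold Mstar; rw [Icc_self, image_singleton, csSup_singleton]

lemma Mstar_continuousOn {T : ℝ} (hT : 0 ≤ T) {ω : ℝ → ℝ}
    (hω : ContinuousOn ω (Icc 0 T)) : ContinuousOn (Mstar ω) (Icc 0 T) := by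
  have huc := (isCompact_Icc (a := (0:ℝ)) (b := T)).uniformContinuousOn_of_continuous hω
  rw [Metric.uniformContinuousOn_iff] at huc
  rw [Metric.continuousOn_iff]
  intro b hb ε hε
  obtain ⟨δ, hδ, hd⟩ := huc (ε/2) (by linarith)
  refine ⟨δ, hδ, fun a ha hab => ?_⟩
  -- key: for x ≤ y in Icc with dist y x < δ, Mstar ω y ≤ Mstar ω x + ε/2
  have key : ∀ x ∈ Icc (0:ℝ) T, ∀ y ∈ Icc (0:ℝ) T, x ≤ y → dist x y < δ →
      Mstar ω y ≤ Mstar ω x + ε/2 := by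
    intro x hx y hy hxy hd'
    refine csSup_le (⟨ω 0, 0, ⟨le_rfl, hx.1.trans hxy⟩, rfl⟩) ?_
    rintro v ⟨u, hu, rfl⟩
    rcases le_or_gt u x with h | h
    · exact (le_Mstar hω hx.2 ⟨hu.1, h⟩).trans (by linarith)
    · have hux : dist u x < δ := by
        rw [Real.dist_eq, abs_of_nonpos (by linarith : x - y ≤ 0)] at hd'
        rw [Real.dist_eq, abs_of_nonneg (by linarith : (0:ℝ) ≤ u - x)]
        linarith [hu.2]
      have := hd u ⟨hu.1, hu.2.trans hy.2⟩ x hx hux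
      rw [Real.dist_eq] at this
      have h1 : ω u - ω x ≤ ε/2 := by
        have := abs_le.mp this.le; linarith [this.2]
      have h2 : ω x ≤ Mstar ω x := le_Mstar hω hx.2 ⟨hx.1, le_rfl⟩
      linarith
  have hm : ∀ x ∈ Icc (0:ℝ) T, ∀ y ∈ Icc (0:ℝ) T, x ≤ y → Mstar ω x ≤ Mstar ω y :=
    fun x hx y hy hxy => Mstar_mono hω hx.1 hxy hy.2
  rw [Real.dist_eq]
  rcases le_total a b with h | h
  · have h1 := key a ha b hb h hab
    have h2 := hm a ha b hb h
    rw [abs_of_nonpos (by linarith)]; linarith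
  · have h1 := key b hb a ha h (by rwa [dist_comm] at hab)
    have h2 := hm b hb a ha h
    rw [abs_of_nonneg (by linarith)]; linarith


section sigma
variable {T : ℝ} {ψ : ℝ → (ℝ → ℝ) → ℝ} {ω : ℝ → ℝ}

/-- The hitting set of `ω`. -/
def hitSet (T : ℝ) (ψ : ℝ → (ℝ → ℝ) → ℝ) (ω : ℝ → ℝ) : Set ℝ :=
  {s ∈ Set.Icc 0 T | ψ s ω ≤ Mstar ω s - ω s}

lemma sigmaStar_def : sigmaStar T ψ ω = sInf (hitSet T ψ ω) := rfl

lemma hit_nonempty (hT : 0 ≤ T) (hω : ContinuousOn ω (Icc 0 T))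
    (hψT : ψ T ω = 0) : T ∈ hitSet T ψ ω := by
  refine ⟨⟨hT, le_rfl⟩, ?_⟩
  rw [hψT]
  have := le_Mstar hω (le_refl T) ⟨hT, le_rfl⟩ (u := T)
  linarith

lemma hit_bddBelow : BddBelow (hitSet T ψ ω) := ⟨0, fun s hs => hs.1.1⟩

lemma hit_closed (hT : 0 ≤ T) (hω : ContinuousOn ω (Icc 0 T))
    (hψc : ContinuousOn (fun t => ψ t ω) (Icc 0 T)) : IsClosed (hitSet T ψ ω) := by
  have : hitSet T ψ ω =
      Icc 0 T ∩ (fun s => ψ s ω - (Mstar ω s - ω s)) ⁻¹' Iic 0 := by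
    ext s; simp only [hitSet, mem_inter_iff, mem_sep_iff, mem_preimage, mem_Iic]
    constructor <;> rintro ⟨h1, h2⟩ <;> exact ⟨h1, by linarith⟩
  rw [this]
  exact ContinuousOn.preimage_isClosed_of_isClosed
    (hψc.sub ((Mstar_continuousOn hT hω).sub (hω.mono le_rfl))) isClosed_Icc isClosed_Iic

lemma sigma_mem (hT : 0 ≤ T) (hω : ContinuousOn ω (Icc 0 T))
    (hψT : ψ T ω = 0) (hψc : ContinuousOn (fun t => ψ t ω) (Icc 0 T)) :
    sigmaStar T ψ ω ∈ hitSet T ψ ω :=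
  (hit_closed hT hω hψc).csInf_mem ⟨T, hit_nonempty hT hω hψT⟩ hit_bddBelow

lemma sigma_lt (hT : 0 ≤ T) {s : ℝ} (hs : s ∈ Icc 0 T)
    (hlt : s < sigmaStar T ψ ω) : Mstar ω s - ω s < ψ s ω := by
  by_contra h
  push_neg at h
  exact absurd (csInf_le hit_bddBelow (⟨hs, h⟩ : s ∈ hitSet T ψ ω)) (not_le.mpr hlt)

/-- Equality at `σ*`. -/
lemma sigma_eq (hT : 0 ≤ T) (hω : ContinuousOn ω (Icc 0 T))
    (hψT : ψ T ω = 0) (hψnn : ∀ t ∈ Icc 0 T, 0 ≤ ψ t ω)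
    (hψc : ContinuousOn (fun t => ψ t ω) (Icc 0 T)) :
    Mstar ω (sigmaStar T ψ ω) - ω (sigmaStar T ψ ω) = ψ (sigmaStar T ψ ω) ω := by
  have hmem := sigma_mem hT hω hψT hψc
  set σ := sigmaStar T ψ ω with hσdef
  refine le_antisymm ?_ hmem.2
  rcases eq_or_lt_of_le hmem.1.1 with h0 | h0
  · rw [← h0, Mstar_zero]
    have := hψnn 0 ⟨le_rfl, hT⟩
    linarith
  · -- σ > 0 : left limit
    have hcont : ContinuousWithinAt (fun s => Mstar ω s - ω s - ψ s ω) (Icc 0 T) σ :=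
      (((Mstar_continuousOn hT hω).sub hω).sub hψc) σ hmem.1
    have hsub : Ico (0:ℝ) σ ⊆ Icc 0 T := fun x hx => ⟨hx.1, hx.2.le.trans hmem.1.2⟩
    have hten : Filter.Tendsto (fun s => Mstar ω s - ω s - ψ s ω)
        (nhdsWithin σ (Ico 0 σ)) (nhds (Mstar ω σ - ω σ - ψ σ ω)) :=
      hcont.tendsto.mono_left (nhdsWithin_mono σ hsub)
    have hne : (nhdsWithin σ (Ico 0 σ)).NeBot := by
      rw [nhdsWithin_Ico_eq_nhdsLT h0]
      infer_instance
    have hev : ∀ᶠ s in nhdsWithin σ (Ico 0 σ),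
        (fun s => Mstar ω s - ω s - ψ s ω) s ≤ 0 :=
      eventually_mem_nhdsWithin.mono fun s hs =>
        sub_nonpos.mpr (le_of_lt (sigma_lt hT (hsub hs) hs.2))
    have := le_of_tendsto hten hev
    linarith
end sigma

/-- under the reaching assumption, for every `(t,ω)` with
`σ*(ω) ≥ t`, the stopping time `σ*` is optimal with respect to `𝒜(t,ω)`:
`ℛ(t,ω;σ*) ≤ ℛ(t,ω;τ)` for every stopping time `τ` admissible for `𝒜(t,ω)`. -/
theorem stmt6 (T : ℝ) (hT : 0 < T) (Ω : Set (ℝ → ℝ))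
    (hΩ : ∀ ω ∈ Ω, ContinuousOn ω (Set.Icc 0 T))
    (ψ : ℝ → (ℝ → ℝ) → ℝ)
    (hψT : ∀ ω ∈ Ω, ψ T ω = 0)
    (hψnn : ∀ ω ∈ Ω, ∀ t ∈ Set.Icc 0 T, 0 ≤ ψ t ω)
    (hψc : ∀ ω ∈ Ω, ContinuousOn (fun t => ψ t ω) (Set.Icc 0 T))
    (hψa : ∀ ω ∈ Ω, StrictAntiOn (fun t => ψ t ω) (Set.Icc 0 T))
    (hψh : ∀ t ∈ Set.Icc 0 T, ∀ ω ∈ Ω, ∀ ω' ∈ Hist Ω t ω, ψ t ω' = ψ t ω)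
    (hreach : ∀ t ∈ Set.Icc 0 T, ∀ ω ∈ Ω,
      ∃ ωh ∈ Hist Ω t ω, ∀ u, t < u → u ≤ T → ωh u < ω t)
    (t : ℝ) (ht : t ∈ Set.Icc 0 T) (ω : ℝ → ℝ) (hω : ω ∈ Ω)
    (hσ : t ≤ sigmaStar T ψ ω)
    (τ : (ℝ → ℝ) → ℝ) (hτ : IsStoppingTime T Ω τ)
    (hadm : ∀ ω'' ∈ Hist Ω t ω, t ≤ τ ω'') :
    worstRegret Ω ψ t ω (sigmaStar T ψ) ≤ worstRegret Ω ψ t ω τ := by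
  have h0T : (0:ℝ) ≤ T := hT.le
  refine iSup₂_le fun ω' hω' => ?_
  obtain ⟨hω'Ω, hagree⟩ := hω'
  have hc' : ContinuousOn ω' (Icc 0 T) := hΩ ω' hω'Ω
  -- σ*(ω') ≥ t
  have hσ' : t ≤ sigmaStar T ψ ω' := by
    refine le_csInf ⟨T, hit_nonempty h0T hc' (hψT ω' hω'Ω)⟩ fun s hs => ?_
    by_contra hst
    push_neg at hst
    have hsIcc : s ∈ Icc 0 T := hs.1
    have hsub : Icc (0:ℝ) s ⊆ Icc 0 t := Icc_subset_Icc le_rfl hst.le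
    have hag : ∀ u ∈ Icc (0:ℝ) s, ω' u = ω u := fun u hu => hagree u (hsub hu)
    have hψeq : ψ s ω' = ψ s ω :=
      hψh s hsIcc ω hω ω' ⟨hω'Ω, hag⟩
    have hMeq : Mstar ω' s = Mstar ω s := Mstar_congr hag
    have hmem : s ∈ hitSet T ψ ω := by
      refine ⟨hsIcc, ?_⟩
      have := hs.2
      rw [hψeq, hMeq, hag s ⟨hsIcc.1, le_rfl⟩] at this
      exact this
    have := csInf_le (hit_bddBelow (T := T) (ψ := ψ) (ω := ω)) hmem
    have hlt : s < sigmaStar T ψ ω := lt_of_lt_of_le hst hσ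
    exact absurd this (not_le.mpr hlt)
  set s' := sigmaStar T ψ ω' with hs'def
  have hs'mem : s' ∈ hitSet T ψ ω' :=
    sigma_mem h0T hc' (hψT ω' hω'Ω) (hψc ω' hω'Ω)
  have hs'Icc : s' ∈ Icc (0:ℝ) T := hs'mem.1
  have hgap : Mstar ω' s' - ω' s' = ψ s' ω' :=
    sigma_eq h0T hc' (hψT ω' hω'Ω) (hψnn ω' hω'Ω) (hψc ω' hω'Ω)
  have hregσ : regret ψ (sigmaStar T ψ) ω' = ψ s' ω' := by
    unfold regret
    rw [← hs'def, hgap, max_self]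
  have hτ'Icc : τ ω' ∈ Icc (0:ℝ) T := hτ.1 ω' hω'Ω
  rcases lt_trichotomy (τ ω') s' with hlt | heq | hgt
  · -- τ stops strictly before σ*: regret σ* ω' < regret τ ω'
    have h1 : ψ s' ω' < ψ (τ ω') ω' := hψa ω' hω'Ω hτ'Icc hs'Icc hlt
    have h2 : regret ψ (sigmaStar T ψ) ω' ≤ regret ψ τ ω' := by
      rw [hregσ]
      exact le_trans h1.le (le_max_right _ _)
    exact le_iSup₂_of_le ω' ⟨hω'Ω, hagree⟩ (ENNReal.ofReal_le_ofReal h2)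
  · have h2 : regret ψ (sigmaStar T ψ) ω' = regret ψ τ ω' := by
      unfold regret
      rw [← hs'def, heq]
    exact le_iSup₂_of_le ω' ⟨hω'Ω, hagree⟩ (ENNReal.ofReal_le_ofReal h2.le)
  · -- τ stops strictly after σ*: use the reaching path
    obtain ⟨ωh, ⟨hωhΩ, hωhag⟩, hωhlt⟩ := hreach s' hs'Icc ω' hω'Ω
    have hωhc : ContinuousOn ωh (Icc 0 T) := hΩ ωh hωhΩ
    have hωhHist : ωh ∈ Hist Ω t ω := by
      refine ⟨hωhΩ, fun u hu => ?_⟩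
      rw [hωhag u (Icc_subset_Icc le_rfl hσ' hu)]
      exact hagree u hu
    have hτωh : s' < τ ωh := by
      by_contra h
      push_neg at h
      have := hτ.2 ωh hωhΩ s' hs'Icc h ω' hω'Ω fun u hu => (hωhag u hu).symm
      linarith
    have hτωhIcc : τ ωh ∈ Icc (0:ℝ) T := hτ.1 ωh hωhΩ
    have hMeq : Mstar ωh (τ ωh) = Mstar ω' s' := by
      refine le_antisymm ?_ ?_
      · show sSup (ωh '' Icc 0 (τ ωh)) ≤ Mstar ω' s'
        refine csSup_le ⟨ωh 0, 0, ⟨le_rfl, hτωhIcc.1⟩, rfl⟩ ?_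
        rintro v ⟨u, hu, rfl⟩
        rcases le_or_gt u s' with h | h
        · rw [hωhag u ⟨hu.1, h⟩]
          exact le_Mstar hc' hs'Icc.2 ⟨hu.1, h⟩
        · exact (hωhlt u h (hu.2.trans hτωhIcc.2)).le.trans
            (le_Mstar hc' hs'Icc.2 ⟨hs'Icc.1, le_rfl⟩)
      · rw [← Mstar_congr hωhag]
        exact Mstar_mono hωhc hs'Icc.1 hτωh.le hτωhIcc.2
    have hlt2 : ωh (τ ωh) < ω' s' := hωhlt (τ ωh) hτωh hτωhIcc.2
    have h2 : regret ψ (sigmaStar T ψ) ω' ≤ regret ψ τ ωh := by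
      rw [hregσ, ← hgap]
      refine le_trans ?_ (le_max_left _ _)
      rw [hMeq]
      linarith
    exact le_iSup₂_of_le ωh hωhHist (ENNReal.ofReal_le_ofReal h2)

end SellingRegret

end
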